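/- arXiv:1312.1562 — 6 statements merged into one kernel-verified Lean document; each statement's English description precedes it below -/
import Mathlib

section
/- Let A be a commutative ℝ-algebra with unit, let c be a real number, and for each integer n let ℓ_n : A → A be an ℝ-linear derivation, such that ℓ_m∘ℓ_n − ℓ_n∘ℓ_m = (m−n)·ℓ_{m+n} for all integers m, n (Witt relations). Let S ∈ A satisfy ℓ_0 S = 2S, ℓ_1 S = 0 and ℓ_2 S = 6·1. Define ℝ-linear maps L_n : A → A by L_n f = ℓ_n f for n ≥ −1, and L_n f = ℓ_n f + (c/(12·(−n−2)!))·(ℓ_{−1}^{(−n−2)} S)·f for n ≤ −2, where ℓ_{−1}^{k} denotes the k-fold iterate of ℓ_{−1}. Then for all integers m, n with m ≥ −1 or n ≥ −1, and all f ∈ A, one has the Virasoro commutation relation L_m(L_n f) − L_n(L_m f) = (m−n)·L_{m+n} f + (c/12)·m·(m²−1)·f when m+n = 0, and L_m(L_n f) − L_n(L_m f) = (m−n)·L_{m+n} f when m+n ≠ 0. -/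
section
variable {A : Type*} [CommRing A] [Algebra ℝ A]

lemma lS_high (ℓ : ℤ → Derivation ℝ A A)
    (hWitt : ∀ m n : ℤ, ∀ f : A,
      ℓ m (ℓ n f) - ℓ n (ℓ m f) = ((m - n : ℤ) : ℝ) • ℓ (m + n) f)
    (S : A) (hS1 : ℓ 1 S = 0) (hS2 : ℓ 2 S = (6 : ℝ) • (1 : A)) :
    ∀ j : ℕ, ℓ (3 + (j : ℤ)) S = 0 := by
  intro j
  induction j with
  | zero =>
      have h := hWitt 2 1 S
      rw [hS1, hS2, map_zero, Derivation.map_smul, Derivation.map_one_eq_zero] at h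
      norm_num at h
      simpa using h.symm
  | succ j ih =>
      have h := hWitt (3 + (j : ℤ)) 1 S
      rw [hS1, ih, map_zero, map_zero] at h
      have h2 : ((3 + (j:ℤ) - 1 : ℤ) : ℝ) • ℓ (3 + (j:ℤ) + 1) S = 0 := by
        rw [← h]; ring
      rcases smul_eq_zero.mp h2 with h3 | h3
      · exfalso
        have : ((3 + (j:ℤ) - 1 : ℤ) : ℝ) ≠ 0 := by
          push_cast
          have : (0:ℝ) ≤ (j:ℝ) := Nat.cast_nonneg j
          linarith
        exact this h3
      · have : (3 : ℤ) + ((j:ℤ)+1) = 3 + (j:ℤ) + 1 := by ring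
        rw [show ((j+1 : ℕ) : ℤ) = (j:ℤ)+1 by push_cast; ring, this, h3]

end

section
variable {A : Type*} [CommRing A] [Algebra ℝ A]

lemma key_lsTk (ℓ : ℤ → Derivation ℝ A A)
    (hWitt : ∀ m n : ℤ, ∀ f : A,
      ℓ m (ℓ n f) - ℓ n (ℓ m f) = ((m - n : ℤ) : ℝ) • ℓ (m + n) f)
    (S : A) (hS0 : ℓ 0 S = (2 : ℝ) • S) (hS1 : ℓ 1 S = 0)
    (hS2 : ℓ 2 S = (6 : ℝ) • (1 : A)) :
    ∀ (k : ℕ) (m : ℤ), -1 ≤ m →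
      ℓ m ((⇑(ℓ (-1)))^[k] S)
        = if m ≤ (k : ℤ) then
            ((((m : ℝ) + k + 2) * k.factorial) / (((k : ℤ) - m).toNat.factorial)) •
              (⇑(ℓ (-1)))^[((k : ℤ) - m).toNat] S
          else if m = (k : ℤ) + 2 then (((k + 3).factorial : ℕ) : ℝ) • (1 : A)
          else 0 := by
  intro k
  induction k with
  | zero =>
      intro m hm
      simp only [Nat.cast_zero, Function.iterate_zero, id_eq]
      rcases (by omega : m = -1 ∨ m = 0 ∨ m = 1 ∨ m = 2 ∨ 3 ≤ m) with h | h | h | h | h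
      · subst h
        rw [if_pos (by omega), show ((0:ℤ) - (-1)).toNat = 1 from by omega]
        norm_num [Nat.factorial]
      · subst h
        rw [if_pos (by omega), show ((0:ℤ) - 0).toNat = 0 from by omega, hS0]
        norm_num [Nat.factorial]
      · subst h
        rw [if_neg (by omega), if_neg (by omega), hS1]
      · subst h
        rw [if_neg (by omega), if_pos (by omega), hS2]
        norm_num [Nat.factorial]
      · rw [if_neg (by omega), if_neg (by omega)]
        have h3 := lS_high ℓ hWitt S hS1 hS2 (m - 3).toNat
        rwa [show (3 + ((m-3).toNat : ℤ)) = m from by omega] at h3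
  | succ k ih =>
      intro m hm
      rw [Function.iterate_succ_apply']
      rcases eq_or_lt_of_le hm with hm1 | hm1
      · -- m = -1
        rw [← hm1]
        rw [if_pos (by push_cast; omega)]
        rw [show (((k+1 : ℕ) : ℤ)) - (-1) = ((k + 2 : ℕ) : ℤ) from by push_cast; ring]
        rw [Int.toNat_natCast]
        rw [show ((⇑(ℓ (-1)))^[k+2]) S = ℓ (-1) ((⇑(ℓ (-1)))^[k+1] S) from
          Function.iterate_succ_apply' _ _ _]
        rw [Function.iterate_succ_apply']
        have hc : (((-1 : ℤ) : ℝ) + ((k+1 : ℕ) : ℝ) + 2) * (((k+1).factorial : ℕ) : ℝ)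
            / (((k+2).factorial : ℕ) : ℝ) = 1 := by
          rw [show (k+2).factorial = (k+2) * (k+1).factorial from Nat.factorial_succ _]
          have h1 : (((k+1).factorial : ℕ) : ℝ) ≠ 0 := by positivity
          push_cast
          field_simp
          ring
        rw [hc, one_smul]
      · -- m ≥ 0
        have hm0 : 0 ≤ m := by omega
        have hw := hWitt m (-1) ((⇑(ℓ (-1)))^[k] S)
        have hstep : ℓ m (ℓ (-1) ((⇑(ℓ (-1)))^[k] S))
            = ℓ (-1) (ℓ m ((⇑(ℓ (-1)))^[k] S))
              + ((m + 1 : ℤ) : ℝ) • ℓ (m - 1) ((⇑(ℓ (-1)))^[k] S) := by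
          rw [show m + (-1) = m - 1 from by ring, show m - (-1) = m + 1 from by ring] at hw
          calc ℓ m (ℓ (-1) ((⇑(ℓ (-1)))^[k] S))
              = (ℓ m (ℓ (-1) ((⇑(ℓ (-1)))^[k] S))
                  - ℓ (-1) (ℓ m ((⇑(ℓ (-1)))^[k] S)))
                + ℓ (-1) (ℓ m ((⇑(ℓ (-1)))^[k] S)) := by ring
            _ = _ := by rw [hw]; ring
        rw [hstep, ih m hm, ih (m-1) (by omega)]
        rcases le_or_gt m (k:ℤ) with hA | hA
        · -- m ≤ k
          set j := ((k:ℤ) - m).toNat with hjdef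
          have hj' : ((k:ℤ) - (m-1)).toNat = j + 1 := by omega
          have hj2 : (((k+1:ℕ):ℤ) - m).toNat = j + 1 := by push_cast; omega
          have hmR : (m:ℝ) = (k:ℝ) - (j:ℝ) := by
            have h : m = (k:ℤ) - (j:ℤ) := by omega
            rw [h]; push_cast; ring
          rw [if_pos hA, if_pos (by omega), if_pos (by push_cast; omega), hj', hj2]
          rw [Derivation.map_smul, Function.iterate_succ_apply']
          rw [smul_smul, ← add_smul]
          congr 1
          have hjne : ((j.factorial : ℕ) : ℝ) ≠ 0 := by positivity
          have hjne1 : ((j:ℝ)+1) ≠ 0 := by positivity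
          push_cast [Nat.factorial_succ]
          rw [hmR]
          field_simp
          ring
        · rcases eq_or_lt_of_le (by omega : (k:ℤ) + 1 ≤ m) with hB | hB
          · -- m = k+1
            rw [if_neg (by omega), if_neg (by omega), if_pos (by omega),
                if_pos (by push_cast; omega), map_zero]
            rw [show ((k:ℤ) - (m-1)).toNat = 0 from by omega,
                show (((k+1:ℕ):ℤ) - m).toNat = 0 from by push_cast; omega]
            rw [zero_add, smul_smul]
            congr 1
            have hmR : (m:ℝ) = (k:ℝ) + 1 := by
              have h : m = (k:ℤ) + 1 := by omega
              rw [h]; push_cast; ring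
            push_cast [Nat.factorial_succ, Nat.factorial_zero]
            rw [hmR]
            field_simp
            ring
          · rcases eq_or_lt_of_le (by omega : (k:ℤ) + 2 ≤ m) with hC | hC
            · -- m = k+2
              rw [if_neg (by omega), if_pos hC.symm, if_neg (by omega), if_neg (by omega),
                  if_neg (by push_cast; omega), if_neg (by push_cast; omega)]
              rw [Derivation.map_smul, Derivation.map_one_eq_zero, smul_zero, smul_zero,
                  add_zero]
            · rcases eq_or_lt_of_le (by omega : (k:ℤ) + 3 ≤ m) with hD | hD
              · -- m = k+3
                rw [if_neg (by omega), if_neg (by omega), if_neg (by omega),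
                    if_pos (by omega : m - 1 = (k:ℤ) + 2),
                    if_neg (by push_cast; omega), if_pos (by push_cast; omega)]
                rw [map_zero, zero_add, smul_smul]
                congr 1
                have hmR : (m:ℝ) = (k:ℝ) + 3 := by
                  have h : m = (k:ℤ) + 3 := by omega
                  rw [h]; push_cast; ring
                have hfac : (((k+1+3).factorial : ℕ) : ℝ)
                    = ((k:ℝ)+4) * (((k+3).factorial : ℕ) : ℝ) := by
                  rw [show k+1+3 = (k+3)+1 from by ring,
                    show ((k+3)+1).factorial = ((k+3)+1) * (k+3).factorial from
                      Nat.factorial_succ _]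
                  push_cast; ring
                rw [hfac]
                push_cast
                rw [hmR]
                ring
              · -- m ≥ k+4
                rw [if_neg (by omega), if_neg (by omega), if_neg (by omega),
                    if_neg (by omega), if_neg (by push_cast; omega),
                    if_neg (by push_cast; omega)]
                rw [map_zero, smul_zero, add_zero]

end

section
variable {A : Type*} [CommRing A] [Algebra ℝ A]

lemma virasoro_aux (c : ℝ) (ℓ : ℤ → Derivation ℝ A A)
    (hWitt : ∀ m n : ℤ, ∀ f : A,
      ℓ m (ℓ n f) - ℓ n (ℓ m f) = ((m - n : ℤ) : ℝ) • ℓ (m + n) f)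
    (S : A)
    (hS0 : ℓ 0 S = (2 : ℝ) • S)
    (hS1 : ℓ 1 S = 0)
    (hS2 : ℓ 2 S = (6 : ℝ) • (1 : A))
    (L : ℤ → A →ₗ[ℝ] A)
    (hL₁ : ∀ n : ℤ, -1 ≤ n → ∀ f : A, L n f = ℓ n f)
    (hL₂ : ∀ n : ℤ, n ≤ -2 → ∀ f : A,
      L n f = ℓ n f
        + (c / (12 * ((-n - 2).toNat.factorial : ℝ))) •
            ((⇑(ℓ (-1)))^[(-n - 2).toNat] S * f)) :
    ∀ m n : ℤ, -1 ≤ m → ∀ f : A,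
      L m (L n f) - L n (L m f)
        = ((m - n : ℤ) : ℝ) • L (m + n) f
          + (if m + n = 0 then c / 12 * (m : ℝ) * ((m : ℝ) ^ 2 - 1) else 0) • f := by
  intro m n hm f
  rcases le_or_gt (-1) n with hn | hn
  · rcases le_or_gt (-1) (m + n) with hmn | hmn
    · rw [hL₁ n hn f, hL₁ m hm (ℓ n f), hL₁ m hm f, hL₁ n hn (ℓ m f),
        hL₁ (m+n) hmn f, hWitt m n f]
      have hz : (if m + n = 0 then c / 12 * (m:ℝ) * ((m:ℝ)^2 - 1) else 0) = 0 := by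
        split_ifs with h0
        · have h2 : -1 ≤ m ∧ m ≤ 1 := ⟨hm, by omega⟩
          obtain ⟨h2a, h2b⟩ := h2
          interval_cases m <;> norm_num
        · rfl
      rw [hz, zero_smul, add_zero]
    · have hm' : m = -1 := by omega
      have hn' : n = -1 := by omega
      subst hm'; subst hn'
      rw [hL₁ (-1) (by norm_num) f, hL₁ (-1) (by norm_num) (ℓ (-1) f)]
      norm_num
  · -- n ≤ -2
    have hn2 : n ≤ -2 := by omega
    obtain ⟨k, hkZ⟩ : ∃ k : ℕ, (k:ℤ) = -n - 2 := ⟨(-n-2).toNat, by omega⟩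
    have hkt : (-n - 2).toNat = k := by omega
    have hnR : (n:ℝ) = -(k:ℝ) - 2 := by
      have h : n = -(k:ℤ) - 2 := by omega
      rw [h]; push_cast; ring
    have hkfne : ((k.factorial : ℕ) : ℝ) ≠ 0 := by positivity
    have expand : L m (L n f) - L n (L m f)
        = ((m - n : ℤ):ℝ) • ℓ (m+n) f
          + (c / (12 * ((k.factorial : ℕ) : ℝ))) • (ℓ m ((⇑(ℓ (-1)))^[k] S) * f) := by
      rw [hL₁ m hm (L n f), hL₂ n hn2 f, hL₁ m hm f, hL₂ n hn2 (ℓ m f), hkt]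
      rw [map_add, Derivation.map_smul, Derivation.leibniz]
      rw [← hWitt m n f]
      simp only [smul_eq_mul]
      simp only [Algebra.smul_def]
      ring
    rw [expand]
    have hkey := key_lsTk ℓ hWitt S hS0 hS1 hS2 k m hm
    rcases le_or_gt m (k:ℤ) with hA | hA
    · -- m + n ≤ -2
      have hmn2 : m + n ≤ -2 := by omega
      rw [if_pos hA] at hkey
      rw [hL₂ (m+n) hmn2 f, show (-(m+n) - 2).toNat = ((k:ℤ) - m).toNat from by omega]
      rw [if_neg (by omega), zero_smul, add_zero, hkey]
      rw [smul_mul_assoc, smul_smul, smul_add, smul_smul]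
      congr 2
      have hjfne : (((((k:ℤ) - m).toNat).factorial : ℕ) : ℝ) ≠ 0 := by positivity
      push_cast
      rw [hnR]
      field_simp
      ring
    · rw [if_neg (by omega)] at hkey
      rcases eq_or_lt_of_le (by omega : (k:ℤ) + 1 ≤ m) with hB | hB
      · -- m = k + 1, m + n = -1
        have hmn : m + n = -1 := by omega
        rw [if_neg (by omega)] at hkey
        rw [hkey, zero_mul, smul_zero, add_zero, hmn,
          hL₁ (-1) (by norm_num) f, if_neg (by norm_num), zero_smul, add_zero]
      · rcases eq_or_lt_of_le (by omega : (k:ℤ) + 2 ≤ m) with hC | hC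
        · -- m = k + 2, m + n = 0
          have hmn : m + n = 0 := by omega
          rw [if_pos hC.symm] at hkey
          rw [hkey, hmn, hL₁ 0 (by norm_num) f, if_pos rfl]
          congr 1
          rw [smul_mul_assoc, one_mul, smul_smul]
          congr 1
          have hmR : (m:ℝ) = (k:ℝ) + 2 := by
            have h : m = (k:ℤ) + 2 := by omega
            rw [h]; push_cast; ring
          have h3 : (((k+3).factorial : ℕ) : ℝ)
              = ((k:ℝ)+3) * (((k+2).factorial : ℕ) : ℝ) := by
            rw [show (k+3).factorial = (k+3) * (k+2).factorial from Nat.factorial_succ _]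
            push_cast; ring
          have h2 : (((k+2).factorial : ℕ) : ℝ)
              = ((k:ℝ)+2) * (((k+1).factorial : ℕ) : ℝ) := by
            rw [show (k+2).factorial = (k+2) * (k+1).factorial from Nat.factorial_succ _]
            push_cast; ring
          have h1 : (((k+1).factorial : ℕ) : ℝ)
              = ((k:ℝ)+1) * ((k.factorial : ℕ) : ℝ) := by
            rw [show (k+1).factorial = (k+1) * k.factorial from Nat.factorial_succ _]
            push_cast; ring
          rw [h3, h2, h1, hmR]
          field_simp
          ring
        · -- m ≥ k + 3, m + n ≥ 1
          rw [if_neg (by omega)] at hkey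
          rw [hkey, zero_mul, smul_zero, add_zero, hL₁ (m+n) (by omega) f,
            if_neg (by omega), zero_smul, add_zero]

end



/-- Virasoro commutation relations for the operators `L n` built from Witt derivations
`ℓ n` and a Schwarzian-connection element `S` in a commutative `ℝ`-algebra. -/
theorem witt_to_virasoro
    {A : Type*} [CommRing A] [Algebra ℝ A] (c : ℝ)
    (ℓ : ℤ → Derivation ℝ A A)
    (hWitt : ∀ m n : ℤ, ∀ f : A,
      ℓ m (ℓ n f) - ℓ n (ℓ m f) = ((m - n : ℤ) : ℝ) • ℓ (m + n) f)
    (S : A)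
    (hS0 : ℓ 0 S = (2 : ℝ) • S)
    (hS1 : ℓ 1 S = 0)
    (hS2 : ℓ 2 S = (6 : ℝ) • (1 : A))
    (L : ℤ → A →ₗ[ℝ] A)
    (hL₁ : ∀ n : ℤ, -1 ≤ n → ∀ f : A, L n f = ℓ n f)
    (hL₂ : ∀ n : ℤ, n ≤ -2 → ∀ f : A,
      L n f = ℓ n f
        + (c / (12 * ((-n - 2).toNat.factorial : ℝ))) •
            ((⇑(ℓ (-1)))^[(-n - 2).toNat] S * f)) :
    ∀ m n : ℤ, (-1 ≤ m ∨ -1 ≤ n) → ∀ f : A,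
      L m (L n f) - L n (L m f)
        = ((m - n : ℤ) : ℝ) • L (m + n) f
          + (if m + n = 0 then c / 12 * (m : ℝ) * ((m : ℝ) ^ 2 - 1) else 0) • f := by
  intro m n hmn f
  rcases hmn with hm | hn
  · exact virasoro_aux c ℓ hWitt S hS0 hS1 hS2 L hL₁ hL₂ m n hm f
  · have h := virasoro_aux c ℓ hWitt S hS0 hS1 hS2 L hL₁ hL₂ n m hn f
    have e1 : ((m - n : ℤ):ℝ) = -((n - m : ℤ):ℝ) := by push_cast; ring
    have e2 : -(if m + n = 0 then c / 12 * (n:ℝ) * ((n:ℝ)^2 - 1) else 0)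
        = (if m + n = 0 then c / 12 * (m:ℝ) * ((m:ℝ)^2 - 1) else 0) := by
      by_cases h0 : m + n = 0
      · rw [if_pos h0, if_pos h0]
        have hnR : (n:ℝ) = -(m:ℝ) := by
          have hh : n = -m := by omega
          rw [hh]; push_cast; ring
        rw [hnR]; ring
      · rw [if_neg h0, if_neg h0, neg_zero]
    calc L m (L n f) - L n (L m f)
        = -(L n (L m f) - L m (L n f)) := by ring
      _ = -(((n - m : ℤ):ℝ) • L (n + m) f
            + (if n + m = 0 then c / 12 * (n:ℝ) * ((n:ℝ)^2 - 1) else 0) • f) := by rw [h]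
      _ = ((m - n : ℤ):ℝ) • L (m + n) f
            + (if m + n = 0 then c / 12 * (m:ℝ) * ((m:ℝ)^2 - 1) else 0) • f := by
          rw [show n + m = m + n from add_comm n m, neg_add, ← neg_smul, ← neg_smul,
            ← e1, e2]
end

section
/- Let V be a complex vector space, τ a nonzero complex number, h = (3τ−2)/4 and c = 13 − 6(τ + τ⁻¹). Let (L_n)_{n∈ℤ} be linear endomorphisms of V satisfying the Virasoro commutation relations L_m∘L_n − L_n∘L_m = (m−n)·L_{m+n} + (c/12)·m·(m²−1)·δ_{m+n,0}·id for all integers m, n. Suppose φ ∈ V satisfies L_0 φ = h·φ and L_k φ = 0 for every integer k ≥ 1. Then the vector ψ = L_{−1}(L_{−1}φ) − τ·L_{−2}φ satisfies L_0 ψ = (h+2)·ψ and L_k ψ = 0 for every integer k ≥ 1. -/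
/-- The level-two singular vector `ψ = L₋₁²φ − τ L₋₂ φ` built on a highest-weight vector
`φ` of weight `h = (3τ−2)/4` and central charge `c = 13 − 6(τ + τ⁻¹)` is again
annihilated by positive modes and has `L₀`-weight `h + 2`. -/
theorem singular_vector_two_one {V : Type*} [AddCommGroup V] [Module ℂ V]
    (τ : ℂ) (hτ : τ ≠ 0)
    (h c : ℂ) (hh : h = (3 * τ - 2) / 4) (hc : c = 13 - 6 * (τ + τ⁻¹))
    (L : ℤ → Module.End ℂ V)
    (hVir : ∀ m n : ℤ, ∀ v : V,
      L m (L n v) - L n (L m v)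
        = ((m - n : ℤ) : ℂ) • L (m + n) v
          + (if m + n = 0 then c / 12 * (m : ℂ) * ((m : ℂ) ^ 2 - 1) else 0) • v)
    (φ : V) (hφ0 : L 0 φ = h • φ) (hφk : ∀ k : ℤ, 1 ≤ k → L k φ = 0) :
    L 0 (L (-1) (L (-1) φ) - τ • L (-2) φ)
        = (h + 2) • (L (-1) (L (-1) φ) - τ • L (-2) φ)
    ∧ ∀ k : ℤ, 1 ≤ k → L k (L (-1) (L (-1) φ) - τ • L (-2) φ) = 0 := by
  have key : ∀ m n : ℤ, ∀ v : V, L m (L n v)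
      = L n (L m v) + ((m - n : ℤ) : ℂ) • L (m + n) v
        + (if m + n = 0 then c / 12 * (m : ℂ) * ((m : ℂ) ^ 2 - 1) else 0) • v := by
    intro m n v
    have h1 := hVir m n v
    have : L m (L n v) = (((m - n : ℤ) : ℂ) • L (m + n) v
        + (if m + n = 0 then c / 12 * (m : ℂ) * ((m : ℂ) ^ 2 - 1) else 0) • v) + L n (L m v) :=
      sub_eq_iff_eq_add.mp h1
    rw [this]; abel
  -- basic facts
  have A1 : L 0 (L (-1) φ) = (h + 1) • L (-1) φ := by
    have := key 0 (-1) φ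
    norm_num at this
    rw [this, hφ0, map_smul, add_smul, one_smul]
  have A1' : L 0 (L (-2) φ) = (h + 2) • L (-2) φ := by
    have := key 0 (-2) φ
    norm_num at this
    rw [this, hφ0, map_smul, add_smul]
  have A2 : L 0 (L (-1) (L (-1) φ)) = (h + 2) • L (-1) (L (-1) φ) := by
    have := key 0 (-1) (L (-1) φ)
    norm_num at this
    rw [this, A1, map_smul]
    module
  have B1 : L 1 (L (-1) φ) = (2 * h) • φ := by
    have := key 1 (-1) φ
    norm_num at this
    rw [this, hφk 1 le_rfl, hφ0, map_zero]
    module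
  have B2 : L 1 (L (-1) (L (-1) φ)) = (4 * h + 2) • L (-1) φ := by
    have := key 1 (-1) (L (-1) φ)
    norm_num at this
    rw [this, B1, A1, map_smul]
    module
  have B3 : L 1 (L (-2) φ) = (3 : ℂ) • L (-1) φ := by
    have := key 1 (-2) φ
    norm_num at this
    rw [this, hφk 1 le_rfl, map_zero]
    module
  have C1 : L 2 (L (-1) φ) = 0 := by
    have := key 2 (-1) φ
    norm_num at this
    rw [this, hφk 2 one_le_two, hφk 1 le_rfl, map_zero]
    module
  have C2 : L 2 (L (-1) (L (-1) φ)) = (6 * h) • φ := by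
    have := key 2 (-1) (L (-1) φ)
    norm_num at this
    rw [this, C1, B1, map_zero]
    module
  have C3 : L 2 (L (-2) φ) = (4 * h + c / 2) • φ := by
    have := key 2 (-2) φ
    norm_num at this
    rw [this, hφk 2 one_le_two, hφ0, map_zero]
    module
  have Dk : ∀ k : ℤ, 3 ≤ k → L k (L (-1) (L (-1) φ) - τ • L (-2) φ) = 0 := by
    intro k hk
    have hk1 : (1 : ℤ) ≤ k := by omega
    have hkm1 : (1 : ℤ) ≤ k - 1 := by omega
    have hkm2 : (1 : ℤ) ≤ k - 2 := by omega
    have D1 : L k (L (-1) φ) = 0 := by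
      have := key k (-1) φ
      rw [if_neg (by omega), hφk k hk1, hφk (k + -1) (by omega), map_zero] at this
      simpa using this
    have D1' : L (k - 1) (L (-1) φ) = 0 := by
      have := key (k - 1) (-1) φ
      rw [if_neg (by omega), hφk (k - 1) hkm1, hφk (k - 1 + -1) (by omega), map_zero] at this
      simpa using this
    have D2 : L k (L (-1) (L (-1) φ)) = 0 := by
      have := key k (-1) (L (-1) φ)
      rw [if_neg (by omega), D1] at this
      have e : k + -1 = k - 1 := by ring
      rw [e, D1', map_zero] at this
      simpa using this
    have D3 : L k (L (-2) φ) = 0 := by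
      have := key k (-2) φ
      rw [if_neg (by omega), hφk k hk1, hφk (k + -2) (by omega), map_zero] at this
      simpa using this
    rw [map_sub, map_smul, D2, D3, smul_zero, sub_zero]
  constructor
  · rw [map_sub, map_smul, A2, A1']
    module
  · intro k hk
    have : k = 1 ∨ k = 2 ∨ 3 ≤ k := by omega
    rcases this with rfl | rfl | hk3
    · rw [map_sub, map_smul, B2, B3]
      have : (4 * h + 2) - τ * 3 = 0 := by rw [hh]; ring
      rw [smul_smul, ← sub_smul, this, zero_smul]
    · rw [map_sub, map_smul, C2, C3]
      have : (6 * h) - τ * (4 * h + c / 2) = 0 := by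
        rw [hh, hc]; field_simp; ring
      rw [smul_smul, ← sub_smul, this, zero_smul]
    · exact Dk k hk3
end

section
/- Fix an integer n ≥ 1 and define, for t ∈ ℝ and z ∈ ℂ, h_t(z) = z·(1 + n·t·z^n)^(−1/n), where w ↦ w^(−1/n) is the principal complex power (Complex.cpow). Then: (i) for every z ∈ ℂ and t ∈ ℝ with |n·t·z^n| < 1/4, the map s ↦ h_s(z) has derivative −(h_t(z))^{n+1} at s = t; (ii) h_0(z) = z; and (iii) for all z ∈ ℂ and t, t' ∈ ℝ with |n·t·z^n| < 1/4 and |n·t'·z^n| < 1/4, one has h_t(h_{t'}(z)) = h_{t+t'}(z). -/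
open Complex

private lemma cpow_pow_aux (w c : ℂ) (hw : w ≠ 0) (m : ℕ) :
    (w ^ c) ^ m = w ^ (c * (m : ℂ)) := by
  rw [Complex.cpow_def_of_ne_zero hw, Complex.cpow_def_of_ne_zero hw, ← Complex.exp_nat_mul]
  congr 1; ring

private lemma one_add_re_pos {u : ℂ} (h : ‖u‖ < 1) : 0 < (1 + u).re := by
  have h1 : |u.re| ≤ ‖u‖ := Complex.abs_re_le_norm u
  have h2 : -‖u‖ ≤ u.re := (abs_le.mp h1).1
  simp only [Complex.add_re, Complex.one_re]
  linarith

private lemma mul_cpow_of_re_pos {a b : ℂ} (ha : 0 < a.re) (hb : 0 < b.re) (c : ℂ) :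
    (a * b) ^ c = a ^ c * b ^ c := by
  have ha0 : a ≠ 0 := by intro h; rw [h] at ha; simp at ha
  have hb0 : b ≠ 0 := by intro h; rw [h] at hb; simp at hb
  have harg : Complex.arg a + Complex.arg b ∈ Set.Ioc (-Real.pi) Real.pi := by
    have h1 : |Complex.arg a| < Real.pi / 2 :=
      Complex.abs_arg_lt_pi_div_two_iff.mpr (Or.inl ha)
    have h2 : |Complex.arg b| < Real.pi / 2 :=
      Complex.abs_arg_lt_pi_div_two_iff.mpr (Or.inl hb)
    rw [abs_lt] at h1 h2
    exact ⟨by linarith [Real.pi_pos], by linarith [Real.pi_pos]⟩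
  rw [Complex.cpow_def_of_ne_zero (mul_ne_zero ha0 hb0), Complex.cpow_def_of_ne_zero ha0,
    Complex.cpow_def_of_ne_zero hb0, ← Complex.exp_add, Complex.log_mul ha0 hb0 harg]
  congr 1; ring


/-- The local flow `h_t(z) = z (1 + n t zⁿ)^{−1/n}` of the vector field `−z^{n+1}∂_z`. -/
noncomputable def flowH (n : ℕ) (t : ℝ) (z : ℂ) : ℂ :=
  z * (1 + (n : ℂ) * (t : ℂ) * z ^ n) ^ (-(1 / (n : ℂ)))

/-- `h_t` is a local flow of the holomorphic vector field `−z^{n+1}∂_z`: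
it solves the ODE, starts at the identity, and has the local one-parameter
group property. -/
theorem flowH_is_local_flow (n : ℕ) (hn : 1 ≤ n) :
    (∀ (z : ℂ) (t : ℝ), ‖(n : ℂ) * (t : ℂ) * z ^ n‖ < 1 / 4 →
      HasDerivAt (fun s : ℝ => flowH n s z) (-(flowH n t z) ^ (n + 1)) t)
    ∧ (∀ z : ℂ, flowH n 0 z = z)
    ∧ (∀ (z : ℂ) (t t' : ℝ), ‖(n : ℂ) * (t : ℂ) * z ^ n‖ < 1 / 4 →
        ‖(n : ℂ) * (t' : ℂ) * z ^ n‖ < 1 / 4 →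
        flowH n t (flowH n t' z) = flowH n (t + t') z) := by
  have hn0 : (n : ℂ) ≠ 0 := by
    exact_mod_cast Nat.cast_ne_zero.mpr (by omega)
  set c : ℂ := -(1 / (n : ℂ)) with hc
  have hcn : c * (n : ℂ) = -1 := by
    rw [hc]; field_simp
  refine ⟨?_, ?_, ?_⟩
  · -- ODE
    intro z t ht
    set u : ℂ := (n : ℂ) * (t : ℂ) * z ^ n with hu
    set w : ℂ := 1 + u with hwdef
    have hwre : 0 < w.re := one_add_re_pos (by linarith)
    have hw0 : w ≠ 0 := by intro h; rw [h] at hwre; simp at hwre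
    have hslit : w ∈ Complex.slitPlane := Or.inl hwre
    -- complex derivative
    have h1 : HasDerivAt (fun v : ℂ => (n : ℂ) * v * z ^ n) ((n : ℂ) * z ^ n) (t : ℂ) := by
      simpa using ((hasDerivAt_id (t : ℂ)).const_mul ((n : ℂ))).mul_const (z ^ n)
    have h2 : HasDerivAt (fun v : ℂ => 1 + (n : ℂ) * v * z ^ n) ((n : ℂ) * z ^ n) (t : ℂ) :=
      h1.const_add 1
    have h3 :
        HasDerivAt (fun v : ℂ => (1 + (n : ℂ) * v * z ^ n) ^ c)
          (c * w ^ (c - 1) * ((n : ℂ) * z ^ n)) (t : ℂ) :=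
      h2.cpow_const (by simpa [hwdef, hu] using hslit)
    have h4 :
        HasDerivAt (fun v : ℂ => z * (1 + (n : ℂ) * v * z ^ n) ^ c)
          (z * (c * w ^ (c - 1) * ((n : ℂ) * z ^ n))) (t : ℂ) :=
      h3.const_mul z
    have h5 := h4.comp_ofReal
    have hfun : (fun s : ℝ => flowH n s z) =
        (fun s : ℝ => z * (1 + (n : ℂ) * (s : ℂ) * z ^ n) ^ c) := by
      funext s; rfl
    rw [hfun]
    convert h5 using 1
    -- show -(flowH n t z)^(n+1) = z * (c * w^(c-1) * (n z^n))
    have hpow : (flowH n t z) ^ (n + 1) = z ^ (n + 1) * w ^ (c * ((n : ℂ) + 1)) := by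
      have : flowH n t z = z * w ^ c := rfl
      rw [this, mul_pow, cpow_pow_aux w c hw0 (n + 1)]
      push_cast
      ring_nf
    have hexp : c * ((n : ℂ) + 1) = c - 1 := by
      have : c * ((n : ℂ) + 1) = c * (n : ℂ) + c := by ring
      rw [this, hcn]; ring
    rw [hpow, hexp]
    have : z * (c * w ^ (c - 1) * ((n : ℂ) * z ^ n)) =
        (c * (n : ℂ)) * (z ^ (n + 1) * w ^ (c - 1)) := by ring
    rw [this, hcn]
    ring
  · -- identity at t = 0
    intro z
    simp [flowH]
  · -- flow property
    intro z t t' h h'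
    set u : ℂ := (n : ℂ) * (t : ℂ) * z ^ n with hu
    set u' : ℂ := (n : ℂ) * (t' : ℂ) * z ^ n with hu'
    set w' : ℂ := 1 + u' with hw'def
    set W : ℂ := 1 + u + u' with hWdef
    have hw're : 0 < w'.re := one_add_re_pos (by linarith)
    have hw'0 : w' ≠ 0 := by intro hcon; rw [hcon] at hw're; simp at hw're
    have hWre : 0 < W.re := by
      have : ‖u + u'‖ < 1 := by
        calc ‖u + u'‖ ≤ ‖u‖ + ‖u'‖ := norm_add_le u u'
          _ < 1 := by linarith
      have := one_add_re_pos this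
      simpa [hWdef, add_assoc] using this
    have hW0 : W ≠ 0 := by intro hcon; rw [hcon] at hWre; simp at hWre
    -- |w'| > 3/4
    have hw'abs : (3 : ℝ) / 4 < ‖w'‖ := by
      have htri : ‖(1 : ℂ)‖ ≤ ‖w'‖ + ‖u'‖ := by
        have := norm_add_le w' (-u')
        simpa [hw'def] using this
      simp only [norm_one] at htri
      linarith
    -- X := flowH n t' z, X^n = z^n * w'⁻¹
    set X : ℂ := flowH n t' z with hX
    have hXn : X ^ n = z ^ n * w'⁻¹ := by
      have : X = z * w' ^ c := rfl
      rw [this, mul_pow, cpow_pow_aux w' c hw'0 n, hcn, Complex.cpow_neg_one]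
    -- Q := 1 + u * w'⁻¹
    set Q : ℂ := 1 + u * w'⁻¹ with hQ
    have hQre : 0 < Q.re := by
      apply one_add_re_pos
      rw [norm_mul, norm_inv, ← div_eq_mul_inv]
      rw [div_lt_one (by linarith)]
      linarith
    have hw'Q : w' * Q = W := by
      rw [hQ, hWdef, hw'def]
      have h1u : (1 + u') * (1 + u')⁻¹ = 1 := mul_inv_cancel₀ hw'0
      linear_combination u * h1u
    -- main computation
    have hL : flowH n t X = X * Q ^ c := by
      have : flowH n t X = X * (1 + (n : ℂ) * (t : ℂ) * X ^ n) ^ c := rfl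
      rw [this, hXn]
      congr 2
      rw [hQ, hu]
      ring
    rw [hL]
    have hXval : X = z * w' ^ c := rfl
    rw [hXval, mul_assoc, ← mul_cpow_of_re_pos hw're hQre, hw'Q]
    have : flowH n (t + t') z = z * (1 + (n : ℂ) * ((t : ℝ) + (t' : ℝ) : ℝ) * z ^ n) ^ c := rfl
    rw [this]
    congr 2
    rw [hWdef, hu, hu']
    push_cast
    ring
end

section
/- Let a, b, C, δ be real numbers with C ≥ 0 and δ > 0, and let θ : (0,∞) → ℝ be a continuous function such that |θ(t) − a/t − b| ≤ C·t for all t ∈ (0,1] and |θ(t)| ≤ C·exp(−δ·t) for all t ≥ 1. Then: (1) there exists a function F holomorphic on {s ∈ ℂ : Re s > −1} such that for every s with Re s > 1, ∫₀^∞ θ(t)·t^{s−1} dt = a/(s−1) + b/s + F(s); (2) consequently there exists a function G holomorphic on {s ∈ ℂ : Re s > −1, s ≠ 1} with G(s) = (1/Γ(s))·∫₀^∞ θ(t)·t^{s−1} dt for all s with Re s > 1, and G(0) = b. -/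
open MeasureTheory

/-- Meromorphic continuation of a zeta function from the short-time expansion
`θ(t) = a/t + b + O(t)` and large-time exponential decay of the heat trace. -/
theorem zeta_continuation_from_heat_trace (a b C δ : ℝ) (hC : 0 ≤ C) (hδ : 0 < δ)
    (θ : ℝ → ℝ) (hθ : ContinuousOn θ (Set.Ioi 0))
    (hsmall : ∀ t ∈ Set.Ioc (0 : ℝ) 1, |θ t - a / t - b| ≤ C * t)
    (hlarge : ∀ t : ℝ, 1 ≤ t → |θ t| ≤ C * Real.exp (-δ * t)) :
    (∃ F : ℂ → ℂ, DifferentiableOn ℂ F {s : ℂ | -1 < s.re} ∧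
      ∀ s : ℂ, 1 < s.re →
        (∫ t in Set.Ioi (0 : ℝ), (θ t : ℂ) * (t : ℂ) ^ (s - 1))
          = a / (s - 1) + b / s + F s)
    ∧ (∃ G : ℂ → ℂ, DifferentiableOn ℂ G {s : ℂ | -1 < s.re ∧ s ≠ 1} ∧
        (∀ s : ℂ, 1 < s.re →
          G s = (1 / Complex.Gamma s)
            * ∫ t in Set.Ioi (0 : ℝ), (θ t : ℂ) * (t : ℂ) ^ (s - 1)) ∧
        G 0 = b) := by
  classical
  set φ : ℝ → ℂ := fun t => (θ t : ℂ) with hφdef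
  set g₁ : ℝ → ℂ := Set.indicator (Set.Ioc 0 1) (fun t : ℝ => (t : ℂ) ^ (-1 : ℂ)) with hg₁def
  set g₀ : ℝ → ℂ := Set.indicator (Set.Ioc 0 1) (fun _ : ℝ => (1 : ℂ)) with hg₀def
  set ind : ℝ → ℂ := fun t => (a : ℂ) • g₁ t + (b : ℂ) • g₀ t with hinddef
  set f : ℝ → ℂ := fun t => φ t - ind t with hfdef
  -- pointwise description of `ind` on `Ioc 0 1`
  have hind_mem : ∀ t ∈ Set.Ioc (0 : ℝ) 1, ind t = ((a / t + b : ℝ) : ℂ) := by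
    intro t ht
    have ht0 : (t : ℂ) ≠ 0 := by
      exact_mod_cast ne_of_gt ht.1
    simp only [hinddef, hg₁def, hg₀def, Set.indicator_of_mem ht, smul_eq_mul, mul_one]
    rw [Complex.cpow_neg_one]
    push_cast
    rw [div_eq_mul_inv]
  have hind_not_mem : ∀ t : ℝ, t ∉ Set.Ioc (0 : ℝ) 1 → ind t = 0 := by
    intro t ht
    simp [hinddef, hg₁def, hg₀def, Set.indicator_of_notMem ht]
  -- local integrability
  have hφc : ContinuousOn φ (Set.Ioi 0) := Complex.continuous_ofReal.comp_continuousOn hθ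
  have hφloc : LocallyIntegrableOn φ (Set.Ioi 0) :=
    hφc.locallyIntegrableOn measurableSet_Ioi
  have hg₁loc : LocallyIntegrableOn g₁ (Set.Ioi 0) := by
    rw [MeasureTheory.locallyIntegrableOn_iff isOpen_Ioi.isLocallyClosed]
    intro k hk hkc
    have hcont : ContinuousOn (fun t : ℝ => (t : ℂ) ^ (-1 : ℂ)) k := by
      intro t ht
      have ht0 : (0 : ℝ) < t := hk ht
      apply ContinuousWithinAt.cpow
      · exact Complex.continuous_ofReal.continuousWithinAt
      · exact continuousWithinAt_const
      · rw [Complex.ofReal_mem_slitPlane]; exact ht0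
    exact (hcont.integrableOn_compact hkc).indicator measurableSet_Ioc
  have hg₀loc : LocallyIntegrableOn g₀ (Set.Ioi 0) := by
    rw [MeasureTheory.locallyIntegrableOn_iff isOpen_Ioi.isLocallyClosed]
    intro k hk hkc
    exact (continuousOn_const.integrableOn_compact hkc).indicator measurableSet_Ioc
  have hindloc : LocallyIntegrableOn ind (Set.Ioi 0) := by
    rw [MeasureTheory.locallyIntegrableOn_iff isOpen_Ioi.isLocallyClosed] at hg₁loc hg₀loc ⊢
    intro k hk hkc
    exact ((hg₁loc k hk hkc).smul (a : ℂ)).add ((hg₀loc k hk hkc).smul (b : ℂ))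
  have hfloc : LocallyIntegrableOn f (Set.Ioi 0) := hφloc.sub hindloc
  -- bound for f near 0
  have hf_small : ∀ t ∈ Set.Ioc (0 : ℝ) 1, ‖f t‖ ≤ C * t := by
    intro t ht
    rw [hfdef]
    simp only
    rw [hind_mem t ht, hφdef]
    rw [← Complex.ofReal_sub, Complex.norm_real]
    calc |θ t - (a / t + b)| = |θ t - a / t - b| := by ring_nf
    _ ≤ C * t := hsmall t ht
  -- O bounds
  have hf_bot : f =O[nhdsWithin 0 (Set.Ioi 0)] (fun t : ℝ => t ^ (-(-1) : ℝ)) := by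
    apply Asymptotics.IsBigO.of_bound C
    filter_upwards [Ioc_mem_nhdsGT_of_mem (Set.mem_Ico.mpr ⟨le_refl (0:ℝ), zero_lt_one⟩)] with t ht
    have h1 : t ^ (-(-1) : ℝ) = t := by rw [neg_neg, Real.rpow_one]
    rw [h1, Real.norm_eq_abs, abs_of_pos ht.1]
    exact hf_small t ht
  have hf_top : f =O[Filter.atTop] fun t : ℝ => Real.exp (-δ * t) := by
    apply Asymptotics.IsBigO.of_bound C
    filter_upwards [Filter.eventually_gt_atTop (1 : ℝ)] with t ht
    have hnot : t ∉ Set.Ioc (0 : ℝ) 1 := fun h => absurd h.2 (not_le.mpr ht)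
    rw [hfdef]
    simp only
    rw [hind_not_mem t hnot, sub_zero, hφdef]
    simp only [Complex.norm_real, Real.norm_eq_abs, Real.abs_exp]
    exact hlarge t ht.le
  -- F is differentiable on re > -1
  have hF : DifferentiableOn ℂ (mellin f) {s : ℂ | -1 < s.re} := by
    intro s hs
    exact (mellin_differentiableAt_of_isBigO_rpow_exp hδ hfloc hf_top hf_bot hs).differentiableWithinAt
  -- the key identity for re s > 1
  have key : ∀ s : ℂ, 1 < s.re →
      (∫ t in Set.Ioi (0 : ℝ), (θ t : ℂ) * (t : ℂ) ^ (s - 1))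
        = a / (s - 1) + b / s + mellin f s := by
    intro s hs
    have hs0 : 0 < s.re := by linarith
    have hs1 : 0 < s.re + (-1 : ℂ).re := by
      simp only [Complex.neg_re, Complex.one_re]; linarith
    have h1 : HasMellin g₁ s (1 / (s + -1)) := hasMellin_cpow_Ioc (-1) hs1
    have h0 : HasMellin g₀ s (1 / s) := hasMellin_one_Ioc hs0
    -- convergence of mellin φ
    have hφ_bot : φ =O[nhdsWithin 0 (Set.Ioi 0)] (fun t : ℝ => t ^ (-(1:ℝ))) := by
      apply Asymptotics.IsBigO.of_bound (C + |a| + |b|)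
      filter_upwards [Ioc_mem_nhdsGT_of_mem (Set.mem_Ico.mpr ⟨le_refl (0:ℝ), zero_lt_one⟩)] with t ht
      have ht0 : 0 < t := ht.1
      have ht1 : t ≤ 1 := ht.2
      have htinv : 1 ≤ t⁻¹ := (one_le_inv₀ ht0).mpr ht1
      have h1 : t ^ (-(1:ℝ)) = t⁻¹ := by rw [Real.rpow_neg_one]
      simp only [h1, hφdef, Complex.norm_real, Real.norm_eq_abs]
      rw [abs_of_pos (inv_pos.mpr ht0)]
      have e1 : |θ t| ≤ |θ t - a / t - b| + |a / t| + |b| := by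
        have : θ t = (θ t - a / t - b) + a / t + b := by ring
        calc |θ t| = |(θ t - a / t - b) + a / t + b| := by rw [← this]
        _ ≤ |(θ t - a / t - b) + a / t| + |b| := abs_add_le _ _
        _ ≤ |θ t - a / t - b| + |a / t| + |b| := by
            exact add_le_add_left (abs_add_le _ _) _
      have e2 : |θ t - a / t - b| ≤ C * t := hsmall t ht
      have e3 : C * t ≤ C * t⁻¹ := by
        apply mul_le_mul_of_nonneg_left _ hC
        calc t ≤ 1 := ht1
        _ ≤ t⁻¹ := htinv
      have e4 : |a / t| ≤ |a| * t⁻¹ := by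
        rw [abs_div, abs_of_pos ht0, div_eq_mul_inv]
      have e5 : |b| ≤ |b| * t⁻¹ := le_mul_of_one_le_right (abs_nonneg _) htinv
      calc |θ t| ≤ |θ t - a / t - b| + |a / t| + |b| := e1
      _ ≤ C * t⁻¹ + |a| * t⁻¹ + |b| * t⁻¹ := by
          exact add_le_add (add_le_add (e2.trans e3) e4) e5
      _ = (C + |a| + |b|) * t⁻¹ := by ring
    have hφ_top : φ =O[Filter.atTop] fun t : ℝ => Real.exp (-δ * t) := by
      apply Asymptotics.IsBigO.of_bound C
      filter_upwards [Filter.eventually_ge_atTop (1 : ℝ)] with t ht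
      simp only [hφdef, Complex.norm_real, Real.norm_eq_abs, Real.abs_exp]
      exact hlarge t ht
    have hφm : MellinConvergent φ s :=
      mellinConvergent_of_isBigO_rpow_exp hδ hφloc hφ_top hφ_bot hs
    -- convergence of mellin ind
    have hindm : MellinConvergent ind s := by
      have ha' : MellinConvergent (fun t => (a : ℂ) • g₁ t) s := h1.1.const_smul _
      have hb' : MellinConvergent (fun t => (b : ℂ) • g₀ t) s := h0.1.const_smul _
      have : MellinConvergent (fun t => (a : ℂ) • g₁ t + (b : ℂ) • g₀ t) s := by
        unfold MellinConvergent at ha' hb' ⊢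
        refine MeasureTheory.IntegrableOn.congr_fun (ha'.add hb') (fun t _ => ?_) measurableSet_Ioi
        simp only [Pi.add_apply, smul_eq_mul]
        ring
      exact this
    have hfm : MellinConvergent f s := by
      unfold MellinConvergent at hφm hindm ⊢
      refine MeasureTheory.IntegrableOn.congr_fun (hφm.sub hindm) (fun t _ => ?_) measurableSet_Ioi
      simp only [Pi.sub_apply, hfdef, smul_eq_mul]
      ring
    -- value of mellin ind
    have hindval : mellin ind s = a / (s - 1) + b / s := by
      have e1 : mellin (fun t => (a : ℂ) • g₁ t) s = (a : ℂ) • mellin g₁ s :=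
        mellin_const_smul g₁ s (a : ℂ)
      have e2 : mellin (fun t => (b : ℂ) • g₀ t) s = (b : ℂ) • mellin g₀ s :=
        mellin_const_smul g₀ s (b : ℂ)
      have e3 : mellin ind s = mellin (fun t => (a : ℂ) • g₁ t) s
          + mellin (fun t => (b : ℂ) • g₀ t) s := by
        unfold mellin
        rw [← MeasureTheory.integral_add]
        · apply MeasureTheory.setIntegral_congr_fun measurableSet_Ioi
          intro t _
          simp only [hinddef, smul_eq_mul]
          ring
        · exact h1.1.const_smul _
        · exact h0.1.const_smul _
      rw [e3, e1, e2, h1.2, h0.2]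
      have : s + -1 = s - 1 := by ring
      rw [this]
      simp [smul_eq_mul, div_eq_mul_inv, one_div]
    -- subtract
    have hsub : mellin f s = mellin φ s - mellin ind s := by
      unfold mellin
      rw [← MeasureTheory.integral_sub hφm hindm]
      apply MeasureTheory.setIntegral_congr_fun measurableSet_Ioi
      intro t _
      simp only [hfdef, smul_eq_mul]
      ring
    have hmellinφ : mellin φ s = ∫ t in Set.Ioi (0 : ℝ), (θ t : ℂ) * (t : ℂ) ^ (s - 1) := by
      unfold mellin
      apply MeasureTheory.setIntegral_congr_fun measurableSet_Ioi
      intro t _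
      simp only [hφdef, smul_eq_mul]
      ring
    rw [← hmellinφ, hsub, hindval]
    ring
  refine ⟨⟨mellin f, hF, key⟩, ?_⟩
  -- part 2
  refine ⟨fun s => (Complex.Gamma s)⁻¹ * ((a : ℂ) / (s - 1) + mellin f s)
      + (b : ℂ) * (Complex.Gamma (s + 1))⁻¹, ?_, ?_, ?_⟩
  · -- differentiability
    intro s hs
    have hs' : s ∈ {s : ℂ | -1 < s.re ∧ s ≠ 1} := hs
    apply DifferentiableWithinAt.add
    · apply DifferentiableWithinAt.mul
      · exact (Complex.differentiable_one_div_Gamma s).differentiableWithinAt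
      · apply DifferentiableWithinAt.add
        · apply DifferentiableWithinAt.div
          · exact differentiableWithinAt_const _
          · exact (differentiable_id.sub_const 1).differentiableAt.differentiableWithinAt
          · exact sub_ne_zero.mpr hs'.2
        · exact (hF s hs'.1).mono (fun x hx => hx.1)
    · apply DifferentiableWithinAt.const_mul
      exact ((Complex.differentiable_one_div_Gamma.comp
        (differentiable_id.add_const 1)) s).differentiableWithinAt
  · -- value for re s > 1
    intro s hs
    have hs0 : s ≠ 0 := by
      intro h
      rw [h] at hs
      simp at hs
      linarith
    rw [key s hs]
    simp only [Complex.Gamma_add_one s hs0, mul_inv, one_div]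
    ring
  · -- value at 0
    simp [Complex.Gamma_zero, Complex.Gamma_one]
end

section
/- Let X be a topological space, n ≥ 1, and let D_1, …, D_n be pairwise disjoint open subsets of X. Let γ_1, …, γ_n be subsets of X with γ_i ⊆ D_i for every i, and let δ ⊆ X be a preconnected subset. Then, as an identity of natural numbers between indicator values: Σ_{i=1}^{n} 𝟙[ δ∩γ_i ≠ ∅ and ¬(δ ⊆ D_i) ] = 𝟙[ δ∩(⋃_i γ_i) ≠ ∅ and ¬(δ ⊆ ⋃_i D_i) ] + Σ_{j=1}^{n} 𝟙[ δ∩γ_j ≠ ∅ and δ∩(⋃_{i<j} γ_i) ≠ ∅ ]. -/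
open Classical in
/-- The per-loop counting identity underlying the loop-measure computation
`Σ_i ν(γ_i; Σ∖D_i) − ν(⋃γ_i; Σ∖D) = Σ_j ν(γ_j; ⋃_{i<j} γ_i)` for a preconnected
loop `δ` and pairwise disjoint open tubes `D_i ⊇ γ_i`. -/
theorem loop_counting_identity {X : Type*} [TopologicalSpace X] (n : ℕ) (hn : 1 ≤ n)
    (D : Fin n → Set X) (hopen : ∀ i, IsOpen (D i))
    (hdisj : ∀ i j, i ≠ j → Disjoint (D i) (D j))
    (γ : Fin n → Set X) (hγ : ∀ i, γ i ⊆ D i)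
    (δ : Set X) (hδ : IsPreconnected δ) :
    (∑ i, if (δ ∩ γ i).Nonempty ∧ ¬ δ ⊆ D i then 1 else 0)
      = ((if (δ ∩ ⋃ i, γ i).Nonempty ∧ ¬ δ ⊆ ⋃ i, D i then 1 else 0)
          + ∑ j, if (δ ∩ γ j).Nonempty ∧ (δ ∩ ⋃ i, ⋃ (_ : i < j), γ i).Nonempty
              then 1 else 0 : ℕ) := by
  classical
  by_cases hS : ∃ i, (δ ∩ γ i).Nonempty
  · obtain ⟨i₀, hi₀⟩ := hS
    by_cases hsub : δ ⊆ ⋃ i, D i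
    · -- δ is contained in the union of the tubes; by preconnectedness it lies in one tube.
      have hδi₀ : δ ⊆ D i₀ := by
        by_contra h
        have hV : (δ ∩ ⋃ j, ⋃ (_ : j ≠ i₀), D j).Nonempty := by
          obtain ⟨x, hxδ, hxn⟩ := Set.not_subset.mp h
          obtain ⟨j, hj⟩ := Set.mem_iUnion.mp (hsub hxδ)
          exact ⟨x, hxδ, Set.mem_iUnion.mpr ⟨j,
            Set.mem_iUnion.mpr ⟨fun e => hxn (e ▸ hj), hj⟩⟩⟩
        have hU : (δ ∩ D i₀).Nonempty :=
          hi₀.mono (Set.inter_subset_inter_right _ (hγ i₀))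
        have hcon := hδ (D i₀) (⋃ j, ⋃ (_ : j ≠ i₀), D j) (hopen i₀)
          (isOpen_iUnion fun j => isOpen_iUnion fun _ => hopen j)
          (fun x hx => by
            obtain ⟨j, hj⟩ := Set.mem_iUnion.mp (hsub hx)
            by_cases e : j = i₀
            · exact Or.inl (e ▸ hj)
            · exact Or.inr (Set.mem_iUnion.mpr ⟨j, Set.mem_iUnion.mpr ⟨e, hj⟩⟩))
          hU hV
        obtain ⟨y, hyδ, hy₀, hyV⟩ := hcon
        obtain ⟨j, hj⟩ := Set.mem_iUnion.mp hyV
        obtain ⟨hje, hyj⟩ := Set.mem_iUnion.mp hj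
        exact Set.disjoint_left.mp (hdisj j i₀ hje) hyj hy₀
      have huniq : ∀ j, (δ ∩ γ j).Nonempty → j = i₀ := by
        rintro j ⟨x, hxδ, hxγ⟩
        by_contra e
        exact Set.disjoint_left.mp (hdisj j i₀ e) (hγ j hxγ) (hδi₀ hxδ)
      have L : ∀ i : Fin n, (if (δ ∩ γ i).Nonempty ∧ ¬ δ ⊆ D i then 1 else 0) = 0 := by
        intro i
        rw [if_neg]
        rintro ⟨h1, h2⟩
        exact h2 ((huniq i h1) ▸ hδi₀)
      have R : ∀ j : Fin n,
          (if (δ ∩ γ j).Nonempty ∧ (δ ∩ ⋃ i, ⋃ (_ : i < j), γ i).Nonempty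
            then 1 else 0) = 0 := by
        intro j
        rw [if_neg]
        rintro ⟨h1, h2⟩
        obtain ⟨x, hxδ, hxU⟩ := h2
        obtain ⟨i, hi⟩ := Set.mem_iUnion.mp hxU
        obtain ⟨hij, hxγ⟩ := Set.mem_iUnion.mp hi
        have e1 : i = i₀ := huniq i ⟨x, hxδ, hxγ⟩
        have e2 : j = i₀ := huniq j h1
        rw [e1, e2] at hij
        exact lt_irrefl _ hij
      rw [Finset.sum_congr rfl fun i _ => L i, Finset.sum_congr rfl fun j _ => R j]
      simp [hsub]
    · -- δ escapes every tube.
      have hni : ∀ i, ¬ δ ⊆ D i :=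
        fun i h => hsub fun x hx => Set.mem_iUnion.mpr ⟨i, h hx⟩
      set S : Finset (Fin n) := Finset.univ.filter fun i => (δ ∩ γ i).Nonempty with hSdef
      have hmemS : ∀ i, i ∈ S ↔ (δ ∩ γ i).Nonempty := by
        intro i; simp [hSdef]
      have hne : S.Nonempty := ⟨i₀, (hmemS i₀).mpr hi₀⟩
      set m := S.min' hne with hmdef
      have hmS : m ∈ S := S.min'_mem hne
      have hLHS : (∑ i, if (δ ∩ γ i).Nonempty ∧ ¬ δ ⊆ D i then 1 else 0) = S.card := by
        rw [hSdef, Finset.card_filter]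
        exact Finset.sum_congr rfl fun i _ => by simp [hni i]
      have hfirst : (if (δ ∩ ⋃ i, γ i).Nonempty ∧ ¬ δ ⊆ ⋃ i, D i then 1 else 0) = 1 := by
        rw [if_pos]
        refine ⟨?_, hsub⟩
        obtain ⟨x, hxδ, hxγ⟩ := hi₀
        exact ⟨x, hxδ, Set.mem_iUnion.mpr ⟨i₀, hxγ⟩⟩
      have hsum : (∑ j, if (δ ∩ γ j).Nonempty ∧ (δ ∩ ⋃ i, ⋃ (_ : i < j), γ i).Nonempty
            then 1 else 0 : ℕ) = (S.erase m).card := by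
        rw [← Finset.card_filter]
        congr 1
        ext j
        simp only [Finset.mem_filter, Finset.mem_univ, true_and, Finset.mem_erase]
        constructor
        · rintro ⟨h1, h2⟩
          obtain ⟨x, hxδ, hxU⟩ := h2
          obtain ⟨i, hi⟩ := Set.mem_iUnion.mp hxU
          obtain ⟨hij, hxγ⟩ := Set.mem_iUnion.mp hi
          have hiS : i ∈ S := (hmemS i).mpr ⟨x, hxδ, hxγ⟩
          refine ⟨?_, (hmemS j).mpr h1⟩
          intro e
          exact absurd hij (not_lt.mpr (e ▸ S.min'_le i hiS))
        · rintro ⟨hjm, hjS⟩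
          refine ⟨(hmemS j).mp hjS, ?_⟩
          have hmj : m < j := lt_of_le_of_ne (S.min'_le j hjS) (Ne.symm hjm)
          obtain ⟨x, hxδ, hxγ⟩ := (hmemS m).mp hmS
          exact ⟨x, hxδ, Set.mem_iUnion.mpr ⟨m, Set.mem_iUnion.mpr ⟨hmj, hxγ⟩⟩⟩
      rw [hLHS, hfirst, hsum, Finset.card_erase_of_mem hmS]
      have : 1 ≤ S.card := Finset.card_pos.mpr hne
      omega
  · push_neg at hS
    have h0' : ∀ i, ¬ (δ ∩ γ i).Nonempty := by
      intro i h; rw [hS i] at h; exact Set.not_nonempty_empty h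
    have hU : ¬ (δ ∩ ⋃ i, γ i).Nonempty := by
      rintro ⟨x, hxδ, hxU⟩
      obtain ⟨i, hi⟩ := Set.mem_iUnion.mp hxU
      exact h0' i ⟨x, hxδ, hi⟩
    simp [h0', hU]
end

section
/- Let n ≤ −2 be an integer and let z, w be complex numbers with |z| = |w| = 1 and z ≠ w. Define R(z,w) = (−z·w/(z−w)²) · ( (n+1)·(z^n + w^n) + (n−1)·(z^{−n} + w^{−n}) − 2·(z^{n+1} − w^{n+1})/(z−w) + 2·(z^{1−n} − w^{1−n})/(z−w) ), with integer powers. Then the real part of R(z,w) equals the real part of 2·z·w·Σ_{i=0}^{−n−2} (i+1)·(−n−1−i)·z^{i}·w^{−n−2−i}. -/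
lemma sumA (m : ℕ) (x y : ℂ) :
    (x - y) ^ 2 * ∑ i ∈ Finset.range (m + 1), ((i : ℂ) + 1) * x ^ i * y ^ (m - i)
      = ((m : ℂ) + 1) * x ^ (m + 2) - ((m : ℂ) + 2) * x ^ (m + 1) * y + y ^ (m + 2) := by
  induction m with
  | zero => simp; ring
  | succ m ih =>
    have hc : ∀ i ∈ Finset.range (m + 1), ((i : ℂ) + 1) * x ^ i * y ^ (m + 1 - i)
        = (((i : ℂ) + 1) * x ^ i * y ^ (m - i)) * y := by
      intro i hi
      rw [show m + 1 - i = (m - i) + 1 by have := Finset.mem_range.mp hi; omega]; ring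
    rw [Finset.sum_range_succ, Finset.sum_congr rfl hc, ← Finset.sum_mul]
    simp only [Nat.sub_self, pow_zero, mul_one]
    push_cast
    linear_combination y * ih

lemma sumB (m : ℕ) (x y : ℂ) :
    (x - y) ^ 3 * ∑ i ∈ Finset.range (m + 1),
        ((i : ℂ) + 1) * ((m : ℂ) + 1 - (i : ℂ)) * x ^ i * y ^ (m - i)
      = ((m : ℂ) + 1) * (x - y) * (x ^ (m + 2) + y ^ (m + 2))
        - 2 * x * y * (x ^ (m + 1) - y ^ (m + 1)) := by
  induction m with
  | zero => simp; ring
  | succ m ih =>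
    have hc : ∀ i ∈ Finset.range (m + 1),
        ((i : ℂ) + 1) * (((m + 1 : ℕ) : ℂ) + 1 - (i : ℂ)) * x ^ i * y ^ (m + 1 - i)
          = (((i : ℂ) + 1) * ((m : ℂ) + 1 - (i : ℂ)) * x ^ i * y ^ (m - i)) * y
            + (((i : ℂ) + 1) * x ^ i * y ^ (m - i)) * y := by
      intro i hi
      rw [show m + 1 - i = (m - i) + 1 by have := Finset.mem_range.mp hi; omega]
      push_cast; ring
    rw [Finset.sum_range_succ, Finset.sum_congr rfl hc, Finset.sum_add_distrib,
      ← Finset.sum_mul, ← Finset.sum_mul]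
    simp only [Nat.sub_self, pow_zero, mul_one]
    push_cast
    linear_combination y * ih + y * (x - y) * sumA m x y

lemma re_eq_of_conj (a b : ℂ) (h : a + (starRingEnd ℂ) a = b + (starRingEnd ℂ) b) :
    a.re = b.re := by
  have := congrArg Complex.re h
  simp only [Complex.add_re, Complex.conj_re] at this
  linarith

set_option maxHeartbeats 4000000 in
/-- The real part of the kernel `R(z,w)` of the variation of the
Dirichlet-to-Neumann operator on the unit circle. -/
theorem dtn_variation_kernel_re (n : ℤ) (hn : n ≤ -2) (z w : ℂ)
    (hz : ‖z‖ = 1) (hw : ‖w‖ = 1) (hzw : z ≠ w) :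
    ((-z * w / (z - w) ^ 2) *
        (((n : ℂ) + 1) * (z ^ n + w ^ n) + ((n : ℂ) - 1) * (z ^ (-n) + w ^ (-n))
          - 2 * (z ^ (n + 1) - w ^ (n + 1)) / (z - w)
          + 2 * (z ^ (1 - n) - w ^ (1 - n)) / (z - w))).re
      = (2 * z * w * ∑ i ∈ Finset.range ((-n - 2).toNat + 1),
          ((i : ℂ) + 1) * (-(n : ℂ) - 1 - (i : ℂ)) * z ^ i * w ^ ((-n - 2).toNat - i)).re := by
  set m := (-n - 2).toNat with hmdef
  have hz0 : z ≠ 0 := by intro h; rw [h] at hz; simp at hz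
  have hw0 : w ≠ 0 := by intro h; rw [h] at hw; simp at hw
  have hzw' : z - w ≠ 0 := sub_ne_zero.mpr hzw
  have hnc : (n : ℂ) = -(m : ℂ) - 2 := by
    rw [show n = -((m : ℤ) + 2) by omega]; push_cast; ring
  have hzn : z ^ n = (z ^ (m + 2))⁻¹ := by
    rw [show n = -((m + 2 : ℕ) : ℤ) by push_cast; omega, zpow_neg, zpow_natCast]
  have hwn : w ^ n = (w ^ (m + 2))⁻¹ := by
    rw [show n = -((m + 2 : ℕ) : ℤ) by push_cast; omega, zpow_neg, zpow_natCast]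
  have hznn : z ^ (-n) = z ^ (m + 2) := by
    rw [show -n = ((m + 2 : ℕ) : ℤ) by push_cast; omega, zpow_natCast]
  have hwnn : w ^ (-n) = w ^ (m + 2) := by
    rw [show -n = ((m + 2 : ℕ) : ℤ) by push_cast; omega, zpow_natCast]
  have hzn1 : z ^ (n + 1) = (z ^ (m + 1))⁻¹ := by
    rw [show n + 1 = -((m + 1 : ℕ) : ℤ) by push_cast; omega, zpow_neg, zpow_natCast]
  have hwn1 : w ^ (n + 1) = (w ^ (m + 1))⁻¹ := by
    rw [show n + 1 = -((m + 1 : ℕ) : ℤ) by push_cast; omega, zpow_neg, zpow_natCast]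
  have hz1n : z ^ (1 - n) = z ^ (m + 3) := by
    rw [show 1 - n = ((m + 3 : ℕ) : ℤ) by push_cast; omega, zpow_natCast]
  have hw1n : w ^ (1 - n) = w ^ (m + 3) := by
    rw [show 1 - n = ((m + 3 : ℕ) : ℤ) by push_cast; omega, zpow_natCast]
  have hS : ∑ i ∈ Finset.range (m + 1),
      ((i : ℂ) + 1) * (-(n : ℂ) - 1 - (i : ℂ)) * z ^ i * w ^ (m - i)
      = (((m : ℂ) + 1) * (z - w) * (z ^ (m + 2) + w ^ (m + 2))
          - 2 * z * w * (z ^ (m + 1) - w ^ (m + 1))) / (z - w) ^ 3 := by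
    rw [eq_div_iff (pow_ne_zero 3 hzw')]
    have hc : ∀ i ∈ Finset.range (m + 1),
        ((i : ℂ) + 1) * (-(n : ℂ) - 1 - (i : ℂ)) * z ^ i * w ^ (m - i)
          = ((i : ℂ) + 1) * ((m : ℂ) + 1 - (i : ℂ)) * z ^ i * w ^ (m - i) := by
      intro i _; rw [hnc]; ring
    rw [Finset.sum_congr rfl hc, mul_comm, sumB]
  rw [hS, hnc, hzn, hwn, hznn, hwnn, hzn1, hwn1, hz1n, hw1n]
  have hzc : (starRingEnd ℂ) z = z⁻¹ :=
    eq_inv_of_mul_eq_one_left (by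
      rw [mul_comm, Complex.mul_conj, ← Complex.sq_norm, hz]; norm_num)
  have hwc : (starRingEnd ℂ) w = w⁻¹ :=
    eq_inv_of_mul_eq_one_left (by
      rw [mul_comm, Complex.mul_conj, ← Complex.sq_norm, hw]; norm_num)
  rw [show (m + 2) = (m + 1) + 1 by ring, show (m + 3) = (m + 1) + 2 by ring,
    pow_succ z (m + 1), pow_succ w (m + 1),
    show z ^ (m + 1 + 2) = z ^ (m + 1) * z ^ 2 by ring,
    show w ^ (m + 1 + 2) = w ^ (m + 1) * w ^ 2 by ring]
  have h1 : z⁻¹ - w⁻¹ = -((z - w) * (z⁻¹ * w⁻¹)) := by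
    field_simp
    ring
  have hz1 : z * z⁻¹ = 1 := mul_inv_cancel₀ hz0
  have hw1 : w * w⁻¹ = 1 := mul_inv_cancel₀ hw0
  have hs1 : (z - w) * (z - w)⁻¹ = 1 := mul_inv_cancel₀ hzw'
  apply re_eq_of_conj
  simp only [map_mul, map_add, map_sub, map_div₀, map_neg, map_inv₀, map_pow,
    map_ofNat, map_one, map_natCast, hzc, hwc]
  rw [h1]
  simp only [div_eq_mul_inv, mul_pow, mul_inv, ← inv_pow, inv_inv, inv_neg]
  linear_combination (0 + w*((z-w)⁻¹)^2*(z⁻¹)^(m+1) + w*((z-w)⁻¹)^2*(z⁻¹)^(m+1)*(m:ℂ) + 3*(w)^2*w⁻¹*((z-w)⁻¹)^2*(z⁻¹)^(m+1) + (w)^2*w⁻¹*((z-w)⁻¹)^2*(z⁻¹)^(m+1)*(m:ℂ) + 2*(w)^3*w⁻¹*((z-w)⁻¹)^3*(z⁻¹)^(m+1) + 2*(w)^4*(w⁻¹)^2*((z-w)⁻¹)^3*(z⁻¹)^(m+1) + 2*(w)^4*(w⁻¹)^2*((z-w)⁻¹)^3*(z⁻¹)^(m+1)*(m:ℂ) +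 3*z*(w)^2*(w⁻¹)^2*((z-w)⁻¹)^2*(w⁻¹)^(m+1) + z*(w)^2*(w⁻¹)^2*((z-w)⁻¹)^2*(w⁻¹)^(m+1)*(m:ℂ) + 3*z*(w)^2*z⁻¹*w⁻¹*((z-w)⁻¹)^2*(z⁻¹)^(m+1) + z*(w)^2*z⁻¹*w⁻¹*((z-w)⁻¹)^2*(z⁻¹)^(m+1)*(m:ℂ) + z*(w)^3*w⁻¹*((z-w)⁻¹)^2*w^(m+1) + z*(w)^3*w⁻¹*((z-w)⁻¹)^2*w^(m+1)*(m:ℂ) + 4*z*(w)^3*(w⁻¹)^2*((z-w)⁻¹)^3*(w⁻¹)^(m+1) - 6*z*(w)^3*(w⁻¹)^2*((z-w)⁻¹)^3*(z⁻¹)^(m+1) - 2*z*(w)^3*(w⁻¹)^2*((z-w)⁻¹)^3*(z⁻¹)^(m+1)*(m:ℂ) + 2*z*(w)^3*z⁻¹*w⁻¹*((z-w)⁻¹)^3*(z⁻¹)^(m+1) + 2*z*(w)^4*(w⁻¹)^3*((z-w)⁻¹)^3*(w⁻¹)^(m+1) + 2*z*(w)^4*(w⁻¹)^3*((z-w)⁻¹)^3*(w⁻¹)^(m+1)*(m:ℂ)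 + 2*z*(w)^4*z⁻¹*(w⁻¹)^2*((z-w)⁻¹)^3*(z⁻¹)^(m+1) + 2*z*(w)^4*z⁻¹*(w⁻¹)^2*((z-w)⁻¹)^3*(z⁻¹)^(m+1)*(m:ℂ) + (z)^2*(w)^2*w⁻¹*((z-w)⁻¹)^2*z^(m+1) + (z)^2*(w)^2*w⁻¹*((z-w)⁻¹)^2*z^(m+1)*(m:ℂ) + 2*(z)^2*(w)^3*w⁻¹*((z-w)⁻¹)^3*w^(m+1) - 2*(z)^2*(w)^3*w⁻¹*((z-w)⁻¹)^3*z^(m+1) - 4*(z)^2*(w)^3*(w⁻¹)^3*((z-w)⁻¹)^3*(w⁻¹)^(m+1) - 2*(z)^2*(w)^3*(w⁻¹)^3*((z-w)⁻¹)^3*(w⁻¹)^(m+1)*(m:ℂ) + 4*(z)^2*(w)^3*z⁻¹*(w⁻¹)^2*((z-w)⁻¹)^3*(w⁻¹)^(m+1) - 6*(z)^2*(w)^3*z⁻¹*(w⁻¹)^2*((z-w)⁻¹)^3*(z⁻¹)^(m+1) - 2*(z)^2*(w)^3*z⁻¹*(w⁻¹)^2*((z-w)⁻¹)^3*(z⁻¹)^(m+1)*(m:ℂ)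 + 2*(z)^2*(w)^3*(z⁻¹)^2*w⁻¹*((z-w)⁻¹)^3*(z⁻¹)^(m+1) + 2*(z)^2*(w)^4*z⁻¹*(w⁻¹)^3*((z-w)⁻¹)^3*(w⁻¹)^(m+1) + 2*(z)^2*(w)^4*z⁻¹*(w⁻¹)^3*((z-w)⁻¹)^3*(w⁻¹)^(m+1)*(m:ℂ) + 2*(z)^2*(w)^4*(z⁻¹)^2*(w⁻¹)^2*((z-w)⁻¹)^3*(z⁻¹)^(m+1) + 2*(z)^2*(w)^4*(z⁻¹)^2*(w⁻¹)^2*((z-w)⁻¹)^3*(z⁻¹)^(m+1)*(m:ℂ) - 2*(z)^3*(w)^3*z⁻¹*(w⁻¹)^3*((z-w)⁻¹)^3*(w⁻¹)^(m+1) - 2*(z)^3*(w)^3*z⁻¹*(w⁻¹)^3*((z-w)⁻¹)^3*(w⁻¹)^(m+1)*(m:ℂ) - 2*(z)^3*(w)^3*(z⁻¹)^2*(w⁻¹)^2*((z-w)⁻¹)^3*(z⁻¹)^(m+1) - 2*(z)^3*(w)^3*(z⁻¹)^2*(w⁻¹)^2*((z-w)⁻¹)^3*(z⁻¹)^(m+1)*(m:ℂ))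 * hz1
    + (0 + 3*w*((z-w)⁻¹)^2*(z⁻¹)^(m+1) + w*((z-w)⁻¹)^2*(z⁻¹)^(m+1)*(m:ℂ) + 4*(w)^2*((z-w)⁻¹)^3*(z⁻¹)^(m+1) + 2*(w)^2*((z-w)⁻¹)^3*(z⁻¹)^(m+1)*(m:ℂ) + 2*(w)^3*w⁻¹*((z-w)⁻¹)^3*(z⁻¹)^(m+1) + 2*(w)^3*w⁻¹*((z-w)⁻¹)^3*(z⁻¹)^(m+1)*(m:ℂ) + 4*z*((z-w)⁻¹)^2*(w⁻¹)^(m+1) + 2*z*((z-w)⁻¹)^2*(w⁻¹)^(m+1)*(m:ℂ) + 6*z*w*((z-w)⁻¹)^3*(w⁻¹)^(m+1) + 2*z*w*((z-w)⁻¹)^3*(w⁻¹)^(m+1)*(m:ℂ) - 6*z*w*((z-w)⁻¹)^3*(z⁻¹)^(m+1) - 2*z*w*((z-w)⁻¹)^3*(z⁻¹)^(m+1)*(m:ℂ) + 3*z*w*w⁻¹*((z-w)⁻¹)^2*(w⁻¹)^(m+1) + z*w*w⁻¹*((z-w)⁻¹)^2*(w⁻¹)^(m+1)*(m:ℂ)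 + z*(w)^2*((z-w)⁻¹)^2*w^(m+1) + z*(w)^2*((z-w)⁻¹)^2*w^(m+1)*(m:ℂ) + 6*z*(w)^2*w⁻¹*((z-w)⁻¹)^3*(w⁻¹)^(m+1) + 2*z*(w)^2*w⁻¹*((z-w)⁻¹)^3*(w⁻¹)^(m+1)*(m:ℂ) - 6*z*(w)^2*w⁻¹*((z-w)⁻¹)^3*(z⁻¹)^(m+1) - 2*z*(w)^2*w⁻¹*((z-w)⁻¹)^3*(z⁻¹)^(m+1)*(m:ℂ) + 2*z*(w)^3*(w⁻¹)^2*((z-w)⁻¹)^3*(w⁻¹)^(m+1) + 2*z*(w)^3*(w⁻¹)^2*((z-w)⁻¹)^3*(w⁻¹)^(m+1)*(m:ℂ) - 4*(z)^2*((z-w)⁻¹)^3*(w⁻¹)^(m+1) - 2*(z)^2*((z-w)⁻¹)^3*(w⁻¹)^(m+1)*(m:ℂ) + (z)^2*w*((z-w)⁻¹)^2*z^(m+1) + (z)^2*w*((z-w)⁻¹)^2*z^(m+1)*(m:ℂ) - 4*(z)^2*w*w⁻¹*((z-w)⁻¹)^3*(w⁻¹)^(m+1) - 2*(z)^2*w*w⁻¹*((z-w)⁻¹)^3*(w⁻¹)^(m+1)*(m:ℂ)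 + 2*(z)^2*(w)^2*((z-w)⁻¹)^3*w^(m+1) - 2*(z)^2*(w)^2*((z-w)⁻¹)^3*z^(m+1) - 4*(z)^2*(w)^2*(w⁻¹)^2*((z-w)⁻¹)^3*(w⁻¹)^(m+1) - 2*(z)^2*(w)^2*(w⁻¹)^2*((z-w)⁻¹)^3*(w⁻¹)^(m+1)*(m:ℂ)) * hw1
    + (0 - 4*w*((z-w)⁻¹)^2*(z⁻¹)^(m+1) - 2*w*((z-w)⁻¹)^2*(z⁻¹)^(m+1)*(m:ℂ) - 4*z*((z-w)⁻¹)^2*(w⁻¹)^(m+1) - 2*z*((z-w)⁻¹)^2*(w⁻¹)^(m+1)*(m:ℂ) - 4*z*(w)^2*((z-w)⁻¹)^2*w^(m+1) - 2*z*(w)^2*((z-w)⁻¹)^2*w^(m+1)*(m:ℂ) - 4*(z)^2*w*((z-w)⁻¹)^2*z^(m+1) - 2*(z)^2*w*((z-w)⁻¹)^2*z^(m+1)*(m:ℂ)) * hs1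
end
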